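/- Let G be a bipartite constraint graph with order ≺ and β : V → {1,2} such that every pair u ≺ v satisfies δ(u,v) ≥ β(v) − 1. Fix v ∈ V, and let f be an integer-valued map defined on {u : u ≺ v} such that for all u,w ≺ v with δ(u,w) < ∞, |f(u) − f(w)| ≤ δ(u,w) and f(u) + f(w) + δ(u,w) is even. If at least one u ≺ v has δ(u,v) < ∞, then the set of integers belonging to every interval [f(u) − δ(u,v), f(u) + δ(u,v)] (over all u ≺ v with δ(u,v) < ∞) has at least 2β(v) − 1 elements. -/

import Mathlib

namespace CountingCSP

/-! ## The basic framework

An instance `Ψ` of `{1,2}`-CSP is modelled by a number `m` of variables, the variable set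
being `Fin m` with its natural linear order `<` (the order of quantification `≺`), a function
`β : Fin m → ℕ` taking values in `{1,2}` (variable `v` is quantified by `∃^{≥ β v}`), and a
simple graph `G` on `Fin m` (the constraint graph).  A target graph is a type `B` together
with an adjacency relation `E : B → B → Prop` (loops allowed in general). -/

/-- Adjacency of the finite path `P_n` on the vertices `{1,…,n}`, modelled as `Fin n`. -/
def pathAdj (n : ℕ) (i j : Fin n) : Prop :=
  (i : ℕ) + 1 = j ∨ (j : ℕ) + 1 = i

/-- Adjacency of the infinite path `P_∞` on `ℤ`: `i` and `j` adjacent iff `|i - j| = 1`. -/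
def intPathAdj (i j : ℤ) : Prop := |i - j| = 1

/-- `SatFrom β G E i f` : processing the variables of the instance in `≺`-increasing order
starting from variable `i`, where the earlier variables have been assigned according to `f`,
the instance can be satisfied.  At each variable `v` one asks for a set `S` of `β v` distinct
elements of the target such that for every `b ∈ S` the rest of the instance can be satisfied
with `v ↦ b`; when all variables are assigned, the assignment must be a homomorphism. -/
def SatFrom {m : ℕ} {B : Type*} (β : Fin m → ℕ) (G : SimpleGraph (Fin m))
    (E : B → B → Prop) (i : ℕ) (f : Fin m → B) : Prop :=
  if h : i < m then
    ∃ S : Finset B, S.card = β ⟨i, h⟩ ∧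
      ∀ b ∈ S, SatFrom β G E (i + 1) (Function.update f ⟨i, h⟩ b)
  else ∀ u v : Fin m, G.Adj u v → E (f u) (f v)
termination_by m - i
decreasing_by omega

/-- `Sat β G E` : the instance with quantifiers `β` and constraint graph `G` is satisfied by
the target graph with adjacency `E`  (i.e. `H ⊨ Ψ`).  The initial assignment is irrelevant
since every variable is assigned before it is used. -/
def Sat {m : ℕ} {B : Type*} (β : Fin m → ℕ) (G : SimpleGraph (Fin m))
    (E : B → B → Prop) : Prop :=
  ∀ f : Fin m → B, SatFrom β G E 0 f

/-- A graph is bipartite iff it has a proper 2-colouring. -/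
def Bipartite {V : Type*} (G : SimpleGraph V) : Prop :=
  ∃ c : V → Bool, ∀ u v, G.Adj u v → c u ≠ c v

/-! ## Walks, looping walks, and the distance function δ -/

/-- `λ(Q) = |Q| − 2·∑_{interior vertices x of Q} (β x − 1)`, where `|Q|` is the length
(number of edges) of the walk `Q = x₁,…,x_r`, and the interior vertices are `x₂,…,x_{r−1}`. -/
def lamWalk {m : ℕ} (β : Fin m → ℕ) (Q : List (Fin m)) : ℤ :=
  ((Q.length : ℤ) - 1) - 2 * (((Q.drop 1).dropLast).map (fun x => (β x : ℤ) - 1)).sum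

/-- Looping walks of `G` (with respect to the quantification order `<` on `Fin m`):
a walk `x₁,…,x_r` with `x₁ ≠ x_r` such that if `r ≥ 3` then both endpoints strictly precede
every interior vertex and the walk splits at some interior position into two looping walks. -/
inductive IsLoopingWalk {m : ℕ} (G : SimpleGraph (Fin m)) : List (Fin m) → Prop
  | base {x y : Fin m} : G.Adj x y → IsLoopingWalk G [x, y]
  | comb {x y z : Fin m} {Q₁ Q₂ : List (Fin m)} :
      IsLoopingWalk G (x :: (Q₁ ++ [y])) →
      IsLoopingWalk G (y :: (Q₂ ++ [z])) →
      x ≠ z →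
      (∀ w ∈ Q₁ ++ y :: Q₂, x < w ∧ z < w) →
      IsLoopingWalk G (x :: (Q₁ ++ y :: Q₂ ++ [z]))

/-- `Q` is a looping walk between `u` and `v` (in either direction). -/
def LoopingWalkBetween {m : ℕ} (G : SimpleGraph (Fin m)) (u v : Fin m)
    (Q : List (Fin m)) : Prop :=
  IsLoopingWalk G Q ∧
    ((Q.head? = some u ∧ Q.getLast? = some v) ∨ (Q.head? = some v ∧ Q.getLast? = some u))

/-- `IsDelta G β u v d` : `d = δ(u,v)`, i.e. `d` is the minimum of `λ(Q)` over all looping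
walks `Q` of `G` between `u` and `v`.  (`δ(u,v) < ∞` corresponds to `∃ d, IsDelta G β u v d`.) -/
def IsDelta {m : ℕ} (G : SimpleGraph (Fin m)) (β : Fin m → ℕ) (u v : Fin m) (d : ℤ) : Prop :=
  (∃ Q, LoopingWalkBetween G u v Q ∧ lamWalk β Q = d) ∧
    ∀ Q, LoopingWalkBetween G u v Q → d ≤ lamWalk β Q

/-! ## The functions γ and γ′ -/

/-- `IsGammaVal G β g v t` : `t = max(0, max_{u ≺ v, δ(u,v) < ∞} (g u − δ(u,v) + β v − 1))`. -/
def IsGammaVal {m : ℕ} (G : SimpleGraph (Fin m)) (β : Fin m → ℕ) (g : Fin m → ℤ)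
    (v : Fin m) (t : ℤ) : Prop :=
  0 ≤ t ∧
  (∀ u, u < v → ∀ d, IsDelta G β u v d → g u - d + (β v : ℤ) - 1 ≤ t) ∧
  (t = 0 ∨ ∃ u, u < v ∧ ∃ d, IsDelta G β u v d ∧ t = g u - d + (β v : ℤ) - 1)

/-- `g` is the function `γ`: `γ(v) = 0` for the `≺`-least vertex, and otherwise
`γ(v) = β(v) − 1 + max(0, max_{u ≺ v, δ(u,v) < ∞} (γ(u) − δ(u,v) + β(v) − 1))`. -/
def IsGamma {m : ℕ} (G : SimpleGraph (Fin m)) (β : Fin m → ℕ) (g : Fin m → ℤ) : Prop :=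
  ∀ v : Fin m,
    if (v : ℕ) = 0 then g v = 0
    else ∃ t, IsGammaVal G β g v t ∧ g v = (β v : ℤ) - 1 + t

/-- `g` is the function `γ′`:
`γ′(v) = β(v) − 1 + max(0, max_{u ≺ v, δ(u,v) < ∞} (γ′(u) − δ(u,v) + β(v) − 1))`
(so `γ′(v) = β(v) − 1` for the `≺`-least vertex). -/
def IsGamma' {m : ℕ} (G : SimpleGraph (Fin m)) (β : Fin m → ℕ) (g : Fin m → ℤ) : Prop :=
  ∀ v : Fin m, ∃ t, IsGammaVal G β g v t ∧ g v = (β v : ℤ) - 1 + t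

/-! ## The closure sets (F, R⁺, R⁻) for the {2}-CSP(K₄) algorithm -/

mutual
/-- Membership in the closure set `F` of pairs (initialised as the edge set of `G`). -/
inductive InF {m : ℕ} (G : SimpleGraph (Fin m)) : Finset (Fin m) → Prop
  | edge {x y : Fin m} : G.Adj x y → InF G {x, y}
  | x3a {x y w z : Fin m} : [x, y, w, z].Pairwise (· ≠ ·) →
      x < z → y < z → w < z → ¬(x < w ∧ y < w) →
      InF G {w, z} → InRp G {x, y, z} → InF G {x, w}
  | x3b {x y w z : Fin m} : [x, y, w, z].Pairwise (· ≠ ·) →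
      x < z → y < z → w < z → ¬(x < w ∧ y < w) →
      InF G {w, z} → InRp G {x, y, z} → InF G {y, w}
  | x4 {x y w z : Fin m} : [x, y, w, z].Pairwise (· ≠ ·) →
      x < y → w < y → y < z →
      InRp G {x, y, z} → InRm G {w, y, z} → InF G {x, w}
  | x7a {x y q w z : Fin m} : [x, y, q, w, z].Pairwise (· ≠ ·) →
      x < q → y < q → w < q → q < z → ¬(x < w ∧ y < w) →
      InRp G {x, y, z} → InRm G {w, q, z} → InF G {x, w}
  | x7a' {x y q w z : Fin m} : [x, y, q, w, z].Pairwise (· ≠ ·) →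
      x < q → y < q → w < q → q < z → ¬(x < w ∧ y < w) →
      InRm G {x, y, z} → InRp G {w, q, z} → InF G {x, w}
  | x7b {x y q w z : Fin m} : [x, y, q, w, z].Pairwise (· ≠ ·) →
      x < q → y < q → w < q → q < z → ¬(x < w ∧ y < w) →
      InRp G {x, y, z} → InRm G {w, q, z} → InF G {y, w}
  | x7b' {x y q w z : Fin m} : [x, y, q, w, z].Pairwise (· ≠ ·) →
      x < q → y < q → w < q → q < z → ¬(x < w ∧ y < w) →
      InRm G {x, y, z} → InRp G {w, q, z} → InF G {y, w}

/-- Membership in the closure set `R⁺` of triples. -/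
inductive InRp {m : ℕ} (G : SimpleGraph (Fin m)) : Finset (Fin m) → Prop
  | x2 {x y w z : Fin m} : [x, y, w, z].Pairwise (· ≠ ·) →
      x < z → y < z → w < z →
      InF G {w, z} → InRm G {x, y, z} → InRp G {x, y, w}
  | x4 {x y w z : Fin m} : [x, y, w, z].Pairwise (· ≠ ·) →
      x < y → w < y → y < z →
      InRp G {x, y, z} → InRm G {w, y, z} → InRp G {x, y, w}
  | x5p {x y w z : Fin m} : [x, y, w, z].Pairwise (· ≠ ·) →
      x < z → y < z → w < z →
      InRp G {x, y, z} → InRp G {w, y, z} → InRp G {x, y, w}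
  | x5m {x y w z : Fin m} : [x, y, w, z].Pairwise (· ≠ ·) →
      x < z → y < z → w < z →
      InRm G {x, y, z} → InRm G {w, y, z} → InRp G {x, y, w}
  | x6ap {x y q w z : Fin m} : [x, y, q, w, z].Pairwise (· ≠ ·) →
      x < q → y < q → w < q → q < z →
      InRp G {x, y, z} → InRp G {w, q, z} → InRp G {x, y, w}
  | x6am {x y q w z : Fin m} : [x, y, q, w, z].Pairwise (· ≠ ·) →
      x < q → y < q → w < q → q < z →
      InRm G {x, y, z} → InRm G {w, q, z} → InRp G {x, y, w}
  | x6bp {x y q w z : Fin m} : [x, y, q, w, z].Pairwise (· ≠ ·) →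
      x < q → y < q → w < q → q < z →
      InRp G {x, y, z} → InRp G {w, q, z} → InRp G {x, y, q}
  | x6bm {x y q w z : Fin m} : [x, y, q, w, z].Pairwise (· ≠ ·) →
      x < q → y < q → w < q → q < z →
      InRm G {x, y, z} → InRm G {w, q, z} → InRp G {x, y, q}

/-- Membership in the closure set `R⁻` of triples. -/
inductive InRm {m : ℕ} (G : SimpleGraph (Fin m)) : Finset (Fin m) → Prop
  | x1 {x y z : Fin m} : [x, y, z].Pairwise (· ≠ ·) →
      x < z → y < z →
      InF G {x, z} → InF G {y, z} → InRm G {x, y, z}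
  | x3 {x y w z : Fin m} : [x, y, w, z].Pairwise (· ≠ ·) →
      x < z → y < z → w < z → x < w → y < w →
      InF G {w, z} → InRp G {x, y, z} → InRm G {x, y, w}
  | x7a {x y q w z : Fin m} : [x, y, q, w, z].Pairwise (· ≠ ·) →
      x < q → y < q → w < q → q < z →
      InRp G {x, y, z} → InRm G {w, q, z} → InRm G {x, y, q}
  | x7a' {x y q w z : Fin m} : [x, y, q, w, z].Pairwise (· ≠ ·) →
      x < q → y < q → w < q → q < z →
      InRm G {x, y, z} → InRp G {w, q, z} → InRm G {x, y, q}
  | x7b {x y q w z : Fin m} : [x, y, q, w, z].Pairwise (· ≠ ·) →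
      x < q → y < q → w < q → q < z → x < w → y < w →
      InRp G {x, y, z} → InRm G {w, q, z} → InRm G {x, y, w}
  | x7b' {x y q w z : Fin m} : [x, y, q, w, z].Pairwise (· ≠ ·) →
      x < q → y < q → w < q → q < z → x < w → y < w →
      InRm G {x, y, z} → InRp G {w, q, z} → InRm G {x, y, w}
end


section Helpers

variable {m : ℕ} {G : SimpleGraph (Fin m)} {β : Fin m → ℕ}

lemma loopingWalk_shape {Q : List (Fin m)} (h : IsLoopingWalk G Q) :
    ∃ a L b, Q = a :: (L ++ [b]) := by
  cases h with
  | base hadj => exact ⟨_, [], _, rfl⟩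
  | @comb x y z Q₁ Q₂ _ _ _ _ => exact ⟨x, Q₁ ++ y :: Q₂, z, by simp⟩

lemma loopingWalk_interior_gt {a b : Fin m} {L : List (Fin m)}
    (h : IsLoopingWalk G (a :: (L ++ [b]))) :
    ∀ t ∈ L, a < t ∧ b < t := by
  generalize hQ : a :: (L ++ [b]) = Q at h
  cases h with
  | @base x y hadj =>
    have hlen := congrArg List.length hQ
    simp at hlen
    subst hlen; simp
  | @comb x y z Q₁ Q₂ h1 h2 hxz hmem =>
    have ha : a = x := by
      have := congrArg List.head? hQ; simpa using this
    have hL : L ++ [b] = (Q₁ ++ y :: Q₂) ++ [z] := by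
      have := hQ; rw [ha] at this
      have h2' : L ++ [b] = Q₁ ++ y :: Q₂ ++ [z] := by
        injection this
      rw [h2']
    obtain ⟨hL1, hb⟩ := List.append_inj' hL rfl
    have hb' : b = z := by injection hb
    subst hL1; subst hb'; subst ha
    exact hmem

lemma loopingWalk_reverse {Q : List (Fin m)} (h : IsLoopingWalk G Q) :
    IsLoopingWalk G Q.reverse := by
  induction h with
  | @base x y hadj =>
    have e : ([x, y] : List (Fin m)).reverse = [y, x] := by simp
    rw [e]; exact .base hadj.symm
  | @comb x y z Q₁ Q₂ h1 h2 hxz hmem ih1 ih2 =>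
    have e : (x :: (Q₁ ++ y :: Q₂ ++ [z])).reverse
        = z :: (Q₂.reverse ++ y :: Q₁.reverse ++ [x]) := by simp
    rw [e]
    have i1 : IsLoopingWalk G (y :: (Q₁.reverse ++ [x])) := by
      have e1 : (x :: (Q₁ ++ [y])).reverse = y :: (Q₁.reverse ++ [x]) := by simp
      rwa [e1] at ih1
    have i2 : IsLoopingWalk G (z :: (Q₂.reverse ++ [y])) := by
      have e2 : (y :: (Q₂ ++ [z])).reverse = z :: (Q₂.reverse ++ [y]) := by simp
      rwa [e2] at ih2
    refine IsLoopingWalk.comb i2 i1 (Ne.symm hxz) ?_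
    intro w hw
    have hw' : w ∈ Q₁ ++ y :: Q₂ := by
      simp only [List.mem_append, List.mem_cons, List.mem_reverse] at hw ⊢
      tauto
    exact ⟨(hmem w hw').2, (hmem w hw').1⟩

lemma lam_shape (β : Fin m → ℕ) (a b : Fin m) (L : List (Fin m)) :
    lamWalk β (a :: (L ++ [b])) =
      (L.length + 1 : ℤ) - 2 * (L.map (fun x => (β x : ℤ) - 1)).sum := by
  unfold lamWalk
  simp

lemma loopingWalk_interior_bound {Q : List (Fin m)} (h : IsLoopingWalk G Q) :
    ∀ S : Finset (Fin m), (∀ x ∈ (Q.drop 1).dropLast, x ∈ S) →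
      ((Q.drop 1).dropLast).length ≤ 2 ^ S.card - 1 := by
  induction h with
  | base hadj => intro S _; simp
  | @comb x y z Q₁ Q₂ h1 h2 hxz hmem ih1 ih2 =>
    intro S hS
    have hint : (((x :: (Q₁ ++ y :: Q₂ ++ [z])).drop 1).dropLast) = Q₁ ++ y :: Q₂ := by
      show ((Q₁ ++ y :: Q₂ ++ [z]) : List (Fin m)).dropLast = Q₁ ++ y :: Q₂
      rw [show (Q₁ ++ y :: Q₂ ++ [z] : List (Fin m)) = (Q₁ ++ y :: Q₂) ++ [z] by simp]
      exact List.dropLast_concat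
    rw [hint] at hS ⊢
    have hint1 : (((x :: (Q₁ ++ [y])).drop 1).dropLast) = Q₁ := by simp
    have hint2 : (((y :: (Q₂ ++ [z])).drop 1).dropLast) = Q₂ := by simp
    rw [hint1] at ih1
    rw [hint2] at ih2
    have hy : y ∈ S := hS y (by simp)
    have h1gt := loopingWalk_interior_gt h1
    have h2gt := loopingWalk_interior_gt h2
    have b1 : Q₁.length ≤ 2 ^ (S.erase y).card - 1 := by
      refine ih1 _ (fun t ht => Finset.mem_erase.2 ⟨(h1gt t ht).2.ne', hS t (by simp [ht])⟩)
    have b2 : Q₂.length ≤ 2 ^ (S.erase y).card - 1 := by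
      refine ih2 _ (fun t ht => Finset.mem_erase.2 ⟨(h2gt t ht).1.ne', hS t (by simp [ht])⟩)
    have hce : (S.erase y).card = S.card - 1 := Finset.card_erase_of_mem hy
    have hc1 : 1 ≤ S.card := Finset.card_pos.2 ⟨y, hy⟩
    have hpow : 2 ^ S.card = 2 * 2 ^ (S.card - 1) := by
      conv_lhs => rw [show S.card = (S.card - 1) + 1 from (Nat.succ_pred_eq_of_pos hc1).symm]
      rw [pow_succ]; ring
    have hp1 : 1 ≤ 2 ^ (S.card - 1) := Nat.one_le_two_pow
    simp only [List.length_append, List.length_cons]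
    rw [hce] at b1 b2
    omega

lemma sum_map_le (hβ : ∀ v, β v = 1 ∨ β v = 2) (L : List (Fin m)) :
    (L.map (fun x => (β x : ℤ) - 1)).sum ≤ L.length := by
  induction L with
  | nil => simp
  | cons a L ih =>
    simp only [List.map_cons, List.sum_cons, List.length_cons]
    rcases hβ a with h | h <;> rw [h] <;> push_cast <;> linarith

lemma loopingWalk_lam_lb (hβ : ∀ v, β v = 1 ∨ β v = 2) {Q : List (Fin m)}
    (h : IsLoopingWalk G Q) : 2 - (2 ^ m : ℤ) ≤ lamWalk β Q := by
  obtain ⟨a, L, b, rfl⟩ := loopingWalk_shape h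
  have hlen : L.length ≤ 2 ^ m - 1 := by
    have := loopingWalk_interior_bound h Finset.univ (fun x _ => Finset.mem_univ x)
    simpa using this
  have h1 : (1 : ℕ) ≤ 2 ^ m := Nat.one_le_two_pow
  have hlenZ : (L.length : ℤ) ≤ (2 ^ m : ℤ) - 1 := by
    have : ((L.length : ℕ) : ℤ) ≤ (((2 ^ m - 1 : ℕ)) : ℤ) := by exact_mod_cast hlen
    rwa [Nat.cast_sub h1, Nat.cast_pow] at this
    
  have hsum := sum_map_le hβ L
  rw [lam_shape]
  linarith

lemma exists_isDelta (hβ : ∀ v, β v = 1 ∨ β v = 2) {u w : Fin m}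
    (hne : ∃ Q, LoopingWalkBetween G u w Q) : ∃ d, IsDelta G β u w d := by
  obtain ⟨lb, hlb, hm⟩ := Int.exists_least_of_bdd
    (P := fun d => ∃ Q, LoopingWalkBetween G u w Q ∧ lamWalk β Q = d)
    ⟨2 - (2 ^ m : ℤ), by rintro z ⟨Q, hQ, rfl⟩; exact loopingWalk_lam_lb hβ hQ.1⟩
    (by obtain ⟨Q, hQ⟩ := hne; exact ⟨lamWalk β Q, Q, hQ, rfl⟩)
  exact ⟨lb, hlb, fun Q hQ => hm _ ⟨Q, hQ, rfl⟩⟩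

lemma between_orient {u w : Fin m} {Q : List (Fin m)} (h : LoopingWalkBetween G u w Q) :
    ∃ L, IsLoopingWalk G (u :: (L ++ [w])) ∧ lamWalk β (u :: (L ++ [w])) = lamWalk β Q := by
  obtain ⟨a, L, b, rfl⟩ := loopingWalk_shape h.1
  have hhead : (a :: (L ++ [b])).head? = some a := rfl
  have hlast : (a :: (L ++ [b])).getLast? = some b := by
    show ((a :: L) ++ [b]).getLast? = some b
    exact List.getLast?_concat
  rcases h.2 with ⟨h1, h2⟩ | ⟨h1, h2⟩
  · rw [hhead] at h1; rw [hlast] at h2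
    obtain rfl : a = u := by injection h1
    obtain rfl : b = w := by injection h2
    exact ⟨L, h.1, rfl⟩
  · rw [hhead] at h1; rw [hlast] at h2
    obtain rfl : a = w := by injection h1
    obtain rfl : b = u := by injection h2
    refine ⟨L.reverse, ?_, ?_⟩
    · have := loopingWalk_reverse h.1
      have e : (a :: (L ++ [b])).reverse = b :: (L.reverse ++ [a]) := by simp
      rwa [e] at this
    · rw [lam_shape, lam_shape]
      rw [List.map_reverse, List.sum_reverse, List.length_reverse]

lemma concat_walks {u w v : Fin m} (huv : u < v) (hwv : w < v) (huw : u ≠ w)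
    {L1 L2 : List (Fin m)} (h1 : IsLoopingWalk G (u :: (L1 ++ [v])))
    (h2 : IsLoopingWalk G (v :: (L2 ++ [w]))) :
    ∃ Q, LoopingWalkBetween G u w Q ∧
      lamWalk β Q = lamWalk β (u :: (L1 ++ [v])) + lamWalk β (v :: (L2 ++ [w]))
        - 2 * ((β v : ℤ) - 1) := by
  have h1gt := loopingWalk_interior_gt h1
  have h2gt := loopingWalk_interior_gt h2
  have hwalk : IsLoopingWalk G (u :: (L1 ++ v :: L2 ++ [w])) := by
    refine IsLoopingWalk.comb h1 h2 huw ?_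
    intro t ht
    rcases List.mem_append.1 ht with ht1 | ht2
    · exact ⟨(h1gt t ht1).1, lt_trans hwv (h1gt t ht1).2⟩
    · rcases List.mem_cons.1 ht2 with rfl | ht2
      · exact ⟨huv, hwv⟩
      · exact ⟨lt_trans huv (h2gt t ht2).1, (h2gt t ht2).2⟩
  refine ⟨u :: (L1 ++ v :: L2 ++ [w]), ⟨hwalk, Or.inl ⟨rfl, ?_⟩⟩, ?_⟩
  · show ((u :: (L1 ++ v :: L2)) ++ [w]).getLast? = some w
    exact List.getLast?_concat
  · have e : u :: (L1 ++ v :: L2 ++ [w]) = u :: ((L1 ++ v :: L2) ++ [w]) := by simp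
    rw [e, lam_shape, lam_shape, lam_shape]
    simp only [List.map_append, List.sum_append, List.map_cons, List.sum_cons,
      List.length_append, List.length_cons]
    push_cast
    ring

end Helpers

/-- Let `G` be bipartite with `δ(u,v) ≥ β(v) − 1` for all `u ≺ v`.  Fix `v`
and let `f` be integer-valued on `{u : u ≺ v}` satisfying `(⋆)` and `(△)` there.  If some
`u ≺ v` has `δ(u,v) < ∞`, then the set of integers lying in every interval
`[f(u) − δ(u,v), f(u) + δ(u,v)]` (over `u ≺ v` with `δ(u,v) < ∞`) has at least `2β(v) − 1`
elements. -/
theorem intersection_of_intervals_large {m : ℕ} (β : Fin m → ℕ)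
    (hβ : ∀ v, β v = 1 ∨ β v = 2) (G : SimpleGraph (Fin m)) (hbip : Bipartite G)
    (hmin : ∀ u v : Fin m, u < v → ∀ d : ℤ, IsDelta G β u v d → (β v : ℤ) - 1 ≤ d)
    (v : Fin m) (f : Fin m → ℤ)
    (hf : ∀ u w : Fin m, u < v → w < v → ∀ d : ℤ, IsDelta G β u w d →
      |f u - f w| ≤ d ∧ Even (f u + f w + d))
    (hne : ∃ u, u < v ∧ ∃ d : ℤ, IsDelta G β u v d) :
    ∃ s : Finset ℤ, 2 * β v - 1 ≤ s.card ∧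
      ∀ x ∈ s, ∀ u : Fin m, u < v → ∀ d : ℤ, IsDelta G β u v d →
        f u - d ≤ x ∧ x ≤ f u + d := by
  classical
  obtain ⟨u₀, hu₀v, d₀, hd₀⟩ := hne
  set k : ℤ := (β v : ℤ) - 1 with hk
  set U : Finset (Fin m) :=
    Finset.univ.filter (fun u => u < v ∧ ∃ d, IsDelta G β u v d) with hUdef
  have hUmem : ∀ u, u ∈ U ↔ (u < v ∧ ∃ d, IsDelta G β u v d) := by
    intro u; simp [hUdef]
  set D : Fin m → ℤ := fun u =>
    if h : ∃ d, IsDelta G β u v d then h.choose else 0 with hDdef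
  have hD : ∀ u ∈ U, IsDelta G β u v (D u) := by
    intro u hu
    obtain ⟨-, hd⟩ := (hUmem u).1 hu
    simp only [hDdef, dif_pos hd]
    exact hd.choose_spec
  have hDk : ∀ u ∈ U, k ≤ D u := fun u hu =>
    hmin u v ((hUmem u).1 hu).1 _ (hD u hu)
  have hU0 : u₀ ∈ U := (hUmem u₀).2 ⟨hu₀v, d₀, hd₀⟩
  have key : ∀ u ∈ U, ∀ w ∈ U, f u - D u + k ≤ f w + D w - k := by
    intro u hu w hw
    obtain ⟨huv, -⟩ := (hUmem u).1 hu
    obtain ⟨hwv, -⟩ := (hUmem w).1 hw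
    by_cases hew : u = w
    · subst hew
      have := hDk u hu
      linarith
    · obtain ⟨Q1, hQ1b, hQ1l⟩ := (hD u hu).1
      obtain ⟨Q2, hQ2b, hQ2l⟩ := (hD w hw).1
      obtain ⟨L1, hL1, hL1lam⟩ := between_orient (β := β) hQ1b
      obtain ⟨L2, hL2, hL2lam⟩ := between_orient (β := β) ⟨hQ2b.1, hQ2b.2.symm⟩
      obtain ⟨Q, hQb, hQlam⟩ := concat_walks huv hwv hew hL1 hL2
      obtain ⟨e, he⟩ := exists_isDelta hβ ⟨Q, hQb⟩
      have habs := (hf u w huv hwv e he).1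
      have hle : e ≤ D u + D w - 2 * k := by
        have h2 := he.2 Q hQb
        rw [hQlam, hL1lam, hL2lam, hQ1l, hQ2l] at h2
        linarith
      have := abs_le.1 habs
      linarith [this.1, this.2]
  set A : Fin m → ℤ := fun u => f u - D u + k with hAdef
  have hne' : (U.image A).Nonempty := ⟨A u₀, Finset.mem_image_of_mem A hU0⟩
  set Lmax := (U.image A).max' hne' with hLdef
  obtain ⟨u₁, hu₁U, hu₁⟩ := Finset.mem_image.1 ((U.image A).max'_mem hne')
  refine ⟨Finset.Icc (Lmax - k) (Lmax + k), ?_, ?_⟩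
  · rw [Int.card_Icc]
    rcases hβ v with h | h <;> rw [h] <;> simp [hk, h] <;> omega
  · intro x hx u huv d hd
    have huU : u ∈ U := (hUmem u).2 ⟨huv, d, hd⟩
    have hdD : d = D u := by
      obtain ⟨⟨Qa, hQa, hQal⟩, hdmin⟩ := hd
      obtain ⟨⟨Qb, hQb, hQbl⟩, hDmin⟩ := hD u huU
      have h1 := hdmin Qb hQb
      have h2 := hDmin Qa hQa
      rw [hQbl] at h1; rw [hQal] at h2
      omega
    obtain ⟨hx1, hx2⟩ := Finset.mem_Icc.1 hx
    have hAle : A u ≤ Lmax := Finset.le_max' _ _ (Finset.mem_image_of_mem A huU)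
    have hLle : Lmax ≤ f u + D u - k := by
      have hK := key u₁ hu₁U u huU
      calc Lmax = A u₁ := hu₁.symm
        _ ≤ f u + D u - k := hK
    have hk' : A u = f u - D u + k := rfl
    constructor
    · rw [hdD]; linarith [hAle, hk']
    · rw [hdD]; linarith


end CountingCSP
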